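/- Let A be the unique ℝ[s]-algebra endomorphism of P with A(t_0) = t_0, A(t_1) = t_1, and A(t_i) = t_i + (−1)^i s^{i−1}/(i−1)! for every i ≥ 2 (a shift of variables by constants; in particular A is an algebra automorphism of P). Then for every integer k ≥ −1 one has the intertwining relation A ∘ L_k = V_k ∘ A as ℝ[s]-linear maps on P. (Equivalently: the change of variables t̃_i = t_i − (2i−1)!! α_{i−1} s^{i−1} for i ≥ 2 transforms the operator V_k into the operator L_k.) -/

import Mathlib

/-!
Statement 1: the variable shift `A : t_i ↦ t_i + (−1)^i s^{i−1}/(i−1)!` (for `i ≥ 2`)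
intertwines the Witten–Kontsevich Virasoro operators `L_k` with the operators `V_k`:
`A ∘ L_k = V_k ∘ A` for all `k ≥ −1`.
-/

open MvPolynomial

noncomputable section

/-- The polynomial ring `P = ℝ[s][t₀, t₁, t₂, …]`; the variable `s` is `Polynomial.X`
in the coefficient ring. -/
abbrev P : Type := MvPolynomial ℕ (Polynomial ℝ)

/-- The odd double factorial `(2n+1)!! = (2n+1)!/(2^n n!)` as a real number. -/
def doubleFactorialOdd (n : ℕ) : ℝ :=
  (Nat.factorial (2 * n + 1) : ℝ) / ((2 : ℝ) ^ n * Nat.factorial n)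

/-- `(2j−1)!!` with the convention `(−1)!! = 1`. -/
def doubleFactorialOddPred (j : ℕ) : ℝ :=
  if j = 0 then 1 else doubleFactorialOdd (j - 1)

/-- `α_i = (−2)^i/(2i+1)!`. -/
def alphaCoeff (i : ℕ) : ℝ := (-2 : ℝ) ^ i / Nat.factorial (2 * i + 1)

/-- The Virasoro operator `V_k`, defined for all `k : ℤ` (intended for `k ≥ −1`). -/
def Vop (k : ℤ) : P → P := fun p =>
  (∑ᶠ i : ℕ,
      (Polynomial.C (-(1 / 2 : ℝ) * doubleFactorialOdd ((i + k + 1 : ℤ)).toNat *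
            alphaCoeff i) * Polynomial.X ^ i) •
        pderiv ((i + k + 1 : ℤ)).toNat p)
  + (∑ᶠ j : ℕ,
      if 0 ≤ (j : ℤ) + k then
        Polynomial.C ((1 / 2 : ℝ) * doubleFactorialOdd ((j + k : ℤ)).toNat /
            doubleFactorialOddPred j) •
          (X j * pderiv ((j + k : ℤ)).toNat p)
      else 0)
  + (if 1 ≤ k then
      ∑ d ∈ Finset.HasAntidiagonal.antidiagonal (k - 1).toNat,
        Polynomial.C ((1 / 4 : ℝ) * doubleFactorialOdd d.1 * doubleFactorialOdd d.2) •
          pderiv d.1 (pderiv d.2 p)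
     else 0)
  + (if k = -1 then Polynomial.C ((1 / 4 : ℝ)) • (X 0 * X 0 * p) else 0)
  + (if k = 0 then Polynomial.C ((1 / 16 : ℝ)) • p else 0)

/-- The Witten–Kontsevich Virasoro operator `L_k`, defined for all `k : ℤ`
(intended for `k ≥ −1`). -/
def Lop (k : ℤ) : P → P := fun p =>
  (Polynomial.C (-(1 / 2 : ℝ) * doubleFactorialOdd ((k + 1 : ℤ)).toNat) •
      pderiv ((k + 1 : ℤ)).toNat p)
  + (∑ᶠ j : ℕ,
      if 0 ≤ (j : ℤ) + k then
        Polynomial.C ((1 / 2 : ℝ) * doubleFactorialOdd ((j + k : ℤ)).toNat /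
            doubleFactorialOddPred j) •
          (X j * pderiv ((j + k : ℤ)).toNat p)
      else 0)
  + (if 1 ≤ k then
      ∑ d ∈ Finset.HasAntidiagonal.antidiagonal (k - 1).toNat,
        Polynomial.C ((1 / 4 : ℝ) * doubleFactorialOdd d.1 * doubleFactorialOdd d.2) •
          pderiv d.1 (pderiv d.2 p)
     else 0)
  + (if k = -1 then Polynomial.C ((1 / 4 : ℝ)) • (X 0 * X 0 * p) else 0)
  + (if k = 0 then Polynomial.C ((1 / 16 : ℝ)) • p else 0)

/-- The constant (in the `t`-variables) shift `γ_i ∈ ℝ[s]`: `γ_0 = γ_1 = 0` and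
`γ_i = (−1)^i s^{i−1}/(i−1)!` for `i ≥ 2`. -/
def shiftPoly (i : ℕ) : Polynomial ℝ :=
  if i ≤ 1 then 0
  else Polynomial.C ((-1 : ℝ) ^ i / Nat.factorial (i - 1)) * Polynomial.X ^ (i - 1)

/-- The unique `ℝ[s]`-algebra endomorphism of `P` with `A(t_i) = t_i + γ_i`
(an algebra automorphism, being a shift of variables by constants). -/
def Aend : P →ₐ[Polynomial ℝ] P :=
  aeval fun i => X i + MvPolynomial.C (shiftPoly i)

/-! ### Auxiliary machinery -/

lemma Aend_X (i : ℕ) : Aend (X i) = X i + MvPolynomial.C (shiftPoly i) :=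
  aeval_X _ _

lemma Aend_C (a : Polynomial ℝ) : Aend (MvPolynomial.C a) = MvPolynomial.C a := by
  simp [Aend, algebraMap_eq]

lemma pderiv_Aend (n : ℕ) (x : P) : pderiv n (Aend x) = Aend (pderiv n x) := by
  induction x using MvPolynomial.induction_on with
  | C a => simp [Aend_C, pderiv_C]
  | add p q hp hq => simp [map_add, hp, hq]
  | mul_X p i hp =>
    simp only [map_mul, Aend_X, pderiv_mul, map_add, hp]
    have h2 : Aend (pderiv n (X i : P)) = pderiv n (X i : P) := by
      rcases eq_or_ne i n with h | h
      · subst h; simp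
      · simp [h]
    rw [pderiv_C, add_zero, h2]

/-- Summand of the second (dilaton-type) term, common to `L_k` and `V_k`. -/
def fL (k : ℤ) (p : P) (j : ℕ) : P :=
  if 0 ≤ (j : ℤ) + k then
    Polynomial.C ((1 / 2 : ℝ) * doubleFactorialOdd ((j + k : ℤ)).toNat /
        doubleFactorialOddPred j) •
      (X j * pderiv ((j + k : ℤ)).toNat p)
  else 0

/-- Summand of the first term of `V_k`. -/
def gV (k : ℤ) (p : P) (i : ℕ) : P :=
  (Polynomial.C (-(1 / 2 : ℝ) * doubleFactorialOdd ((i + k + 1 : ℤ)).toNat *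
      alphaCoeff i) * Polynomial.X ^ i) • pderiv ((i + k + 1 : ℤ)).toNat p

/-- The extra terms produced by the shift in the dilaton-type term. -/
def rT (k : ℤ) (p : P) (j : ℕ) : P :=
  if 0 ≤ (j : ℤ) + k then
    Polynomial.C ((1 / 2 : ℝ) * doubleFactorialOdd ((j + k : ℤ)).toNat /
        doubleFactorialOddPred j) •
      (MvPolynomial.C (shiftPoly j) * pderiv ((j + k : ℤ)).toNat p)
  else 0

def T3 (k : ℤ) (p : P) : P :=
  if 1 ≤ k then
    ∑ d ∈ Finset.HasAntidiagonal.antidiagonal (k - 1).toNat,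
      Polynomial.C ((1 / 4 : ℝ) * doubleFactorialOdd d.1 * doubleFactorialOdd d.2) •
        pderiv d.1 (pderiv d.2 p)
  else 0

def T4 (k : ℤ) (p : P) : P :=
  if k = -1 then Polynomial.C ((1 / 4 : ℝ)) • (X 0 * X 0 * p) else 0

def T5 (k : ℤ) (p : P) : P :=
  if k = 0 then Polynomial.C ((1 / 16 : ℝ)) • p else 0

lemma shiftPoly_zero : shiftPoly 0 = 0 := by simp [shiftPoly]

lemma shiftPoly_one : shiftPoly 1 = 0 := by simp [shiftPoly]

lemma Aend_T3 (k : ℤ) (p : P) : Aend (T3 k p) = T3 k (Aend p) := by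
  unfold T3
  split
  · rw [map_sum]
    exact Finset.sum_congr rfl fun d _ => by
      rw [map_smul, pderiv_Aend, pderiv_Aend]
  · simp

lemma Aend_T4 (k : ℤ) (p : P) : Aend (T4 k p) = T4 k (Aend p) := by
  unfold T4
  split
  · rw [map_smul, map_mul, map_mul, Aend_X, shiftPoly_zero, map_zero, add_zero]
  · simp

lemma Aend_T5 (k : ℤ) (p : P) : Aend (T5 k p) = T5 k (Aend p) := by
  unfold T5
  split
  · rw [map_smul]
  · simp

lemma finsum_shift (f : ℕ → P) (M : ℕ) (h : ∀ x, M ≤ x → f x = 0) :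
    ∑ᶠ x, f x = ∑ x ∈ Finset.range M, f x := by
  apply finsum_eq_sum_of_support_subset
  intro x hx
  simp only [Finset.coe_range, Set.mem_Iio]
  by_contra hc
  exact hx (h x (le_of_not_gt hc))

set_option maxHeartbeats 1000000 in
/-- The intertwining relation `A ∘ L_k = V_k ∘ A` for all `k ≥ −1`: the change of
variables `t̃_i = t_i − (2i−1)!! α_{i−1} s^{i−1}` transforms `V_k` into `L_k`. -/
theorem Aend_intertwines (k : ℤ) (hk : -1 ≤ k) :
    ∀ p : P, Aend (Lop k p) = Vop k (Aend p) := by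
  intro p
  show Aend
      ((Polynomial.C (-(1 / 2 : ℝ) * doubleFactorialOdd ((k + 1 : ℤ)).toNat) •
          pderiv ((k + 1 : ℤ)).toNat p)
        + (∑ᶠ j : ℕ, fL k p j) + T3 k p + T4 k p + T5 k p)
    = (∑ᶠ i : ℕ, gV k (Aend p) i) + (∑ᶠ j : ℕ, fL k (Aend p) j)
        + T3 k (Aend p) + T4 k (Aend p) + T5 k (Aend p)
  obtain ⟨N, hN⟩ : ∃ N : ℕ, ∀ m, N ≤ m → pderiv m p = 0 := by
    refine ⟨p.vars.sup id + 1, fun m hm => pderiv_eq_zero_of_notMem_vars ?_⟩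
    intro hmem
    have := Finset.le_sup (f := id) hmem
    simp only [id] at this
    omega
  have hNq : ∀ m, N ≤ m → pderiv m (Aend p) = 0 := fun m hm => by
    rw [pderiv_Aend, hN m hm, map_zero]
  have e1 : ∑ᶠ j : ℕ, fL k p j = ∑ j ∈ Finset.range (N + 2), fL k p j := by
    refine finsum_shift _ _ fun x hx => ?_
    unfold fL
    split
    · rw [hN ((x : ℤ) + k).toNat (by omega), mul_zero, smul_zero]
    · rfl
  have e2 : ∑ᶠ j : ℕ, fL k (Aend p) j = ∑ j ∈ Finset.range (N + 2), fL k (Aend p) j := by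
    refine finsum_shift _ _ fun x hx => ?_
    unfold fL
    split
    · rw [hNq ((x : ℤ) + k).toNat (by omega), mul_zero, smul_zero]
    · rfl
  have e3 : ∑ᶠ i : ℕ, gV k (Aend p) i = ∑ i ∈ Finset.range (N + 2), gV k (Aend p) i := by
    refine finsum_shift _ _ fun x hx => ?_
    unfold gV
    rw [hNq ((x : ℤ) + k + 1).toNat (by omega), smul_zero]
  rw [map_add, map_add, map_add, map_add, Aend_T3, Aend_T4, Aend_T5, map_smul,
    ← pderiv_Aend, e1, map_sum, e2, e3]
  have hfL : ∀ j ∈ Finset.range (N + 2),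
      Aend (fL k p j) = fL k (Aend p) j + rT k (Aend p) j := by
    intro j _
    unfold fL rT
    split
    · rw [map_smul, map_mul, Aend_X, ← pderiv_Aend, add_mul, smul_add]
    · simp
  rw [Finset.sum_congr rfl hfL, Finset.sum_add_distrib]
  congr 1
  congr 1
  congr 1
  have hgN : gV k (Aend p) (N + 1) = 0 := by
    unfold gV
    rw [hNq (((N + 1 : ℕ) : ℤ) + k + 1).toNat (by omega), smul_zero]
  have hr0 : rT k (Aend p) 0 = 0 := by
    unfold rT
    split
    · rw [shiftPoly_zero, map_zero, zero_mul, smul_zero]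
    · rfl
  have hr1 : rT k (Aend p) 1 = 0 := by
    unfold rT
    split
    · rw [shiftPoly_one, map_zero, zero_mul, smul_zero]
    · rfl
  have hg : ∑ i ∈ Finset.range (N + 2), gV k (Aend p) i
      = ((∑ i ∈ Finset.range N, gV k (Aend p) (i + 1)) + gV k (Aend p) (N + 1))
          + gV k (Aend p) 0 := by
    rw [Finset.sum_range_succ' (fun i => gV k (Aend p) i) (N + 1), Finset.sum_range_succ]
  have hr : ∑ j ∈ Finset.range (N + 2), rT k (Aend p) j
      = ((∑ j ∈ Finset.range N, rT k (Aend p) (j + 1 + 1)) + rT k (Aend p) (0 + 1))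
          + rT k (Aend p) 0 := by
    rw [Finset.sum_range_succ' (fun j => rT k (Aend p) j) (N + 1),
      Finset.sum_range_succ' (fun j => rT k (Aend p) (j + 1)) N]
  have hg0 : gV k (Aend p) 0
      = Polynomial.C (-(1 / 2 : ℝ) * doubleFactorialOdd ((k + 1 : ℤ)).toNat) •
          pderiv ((k + 1 : ℤ)).toNat (Aend p) := by
    unfold gV
    norm_num [alphaCoeff]
  have hmain : ∀ i ∈ Finset.range N,
      gV k (Aend p) (i + 1) = rT k (Aend p) (i + 1 + 1) := by
    intro i _
    unfold gV rT
    rw [if_pos (by push_cast; omega)]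
    have hidx : (((i + 1 : ℕ) : ℤ) + k + 1).toNat = (((i + 1 + 1 : ℕ) : ℤ) + k).toNat := by
      push_cast; omega
    rw [hidx]
    rw [smul_eq_C_mul, smul_eq_C_mul, ← mul_assoc, ← map_mul]
    congr 2
    rw [shiftPoly, if_neg (by omega)]
    rw [show i + 1 + 1 - 1 = i + 1 from rfl, ← mul_assoc, ← Polynomial.C_mul]
    congr 1
    have h1 : doubleFactorialOddPred (i + 1 + 1) = doubleFactorialOdd (i + 1) := by
      simp [doubleFactorialOddPred]
    rw [h1]
    unfold alphaCoeff doubleFactorialOdd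
    have hF : ((2 * (i + 1) + 1).factorial : ℝ) ≠ 0 :=
      Nat.cast_ne_zero.mpr (Nat.factorial_ne_zero _)
    have hf2 : ((i + 1).factorial : ℝ) ≠ 0 :=
      Nat.cast_ne_zero.mpr (Nat.factorial_ne_zero _)
    have h2p : (2 : ℝ) ^ (i + 1) ≠ 0 := by positivity
    rw [show ((-2 : ℝ)) ^ (i + 1) = (-1) ^ (i + 1) * 2 ^ (i + 1) by
      rw [← neg_one_mul, mul_pow]]
    field_simp
    ring
  have key : ∑ i ∈ Finset.range (N + 2), gV k (Aend p) i
      = Polynomial.C (-(1 / 2 : ℝ) * doubleFactorialOdd ((k + 1 : ℤ)).toNat) •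
          pderiv ((k + 1 : ℤ)).toNat (Aend p)
        + ∑ j ∈ Finset.range (N + 2), rT k (Aend p) j := by
    rw [hg, hr, hg0, hgN, hr0, hr1, Finset.sum_congr rfl hmain]
    abel
  rw [key]
  abel

end
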